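/- Let A satisfy the structural assumptions (A = -e₁e₁ᵗ - V⁻¹M, V positive diagonal, M symmetric irreducible with positive diagonal, nonpositive off-diagonal, zero row sums) and suppose (A, e₁) is controllable. Let P diagonalize Ã: P⁻¹ÃP = Δ diagonal, with all entries of P⁻¹𝟙̃ nonzero and the eigenvalues of Ã distinct. Define R̃ = -PΔ⁻¹diag(P⁻¹A(2:n,1)) and R = diag(1, R̃) (block diagonal). Then R is invertible and R⁻¹AR is an MRMT matrix, i.e., R⁻¹AR satisfies the same structural assumptions and its lower-right (n−1)×(n−1) block is diagonal. -/

import Mathlib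

open Matrix

/-- Block-diagonal matrix diag(1, R̃). -/
def blockDiag1 {n : ℕ} (Rt : Matrix (Fin n) (Fin n) ℝ) :
    Matrix (Fin (n + 1)) (Fin (n + 1)) ℝ :=
  Matrix.of fun i j =>
    if hi : i = 0 then (if j = 0 then 1 else 0)
    else if hj : j = 0 then 0
    else Rt (i.pred hi) (j.pred hj)

@[simp] lemma bd_00 {n : ℕ} (Rt : Matrix (Fin n) (Fin n) ℝ) : blockDiag1 Rt 0 0 = 1 := by
  simp [blockDiag1]

@[simp] lemma bd_0s {n : ℕ} (Rt : Matrix (Fin n) (Fin n) ℝ) (j : Fin n) :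
    blockDiag1 Rt 0 j.succ = 0 := by
  simp [blockDiag1, (Fin.succ_ne_zero j)]

@[simp] lemma bd_s0 {n : ℕ} (Rt : Matrix (Fin n) (Fin n) ℝ) (i : Fin n) :
    blockDiag1 Rt i.succ 0 = 0 := by
  simp [blockDiag1, (Fin.succ_ne_zero i)]

@[simp] lemma bd_ss {n : ℕ} (Rt : Matrix (Fin n) (Fin n) ℝ) (i j : Fin n) :
    blockDiag1 Rt i.succ j.succ = Rt i j := by
  simp [blockDiag1, (Fin.succ_ne_zero i), (Fin.succ_ne_zero j)]

lemma bd_mul {n : ℕ} (S T : Matrix (Fin n) (Fin n) ℝ) :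
    blockDiag1 S * blockDiag1 T = blockDiag1 (S * T) := by
  ext i j
  induction i using Fin.cases with
  | zero =>
    induction j using Fin.cases with
    | zero => simp [Matrix.mul_apply, Fin.sum_univ_succ]
    | succ j => simp [Matrix.mul_apply, Fin.sum_univ_succ]
  | succ i =>
    induction j using Fin.cases with
    | zero => simp [Matrix.mul_apply, Fin.sum_univ_succ]
    | succ j => simp [Matrix.mul_apply, Fin.sum_univ_succ]

lemma bd_one {n : ℕ} : blockDiag1 (1 : Matrix (Fin n) (Fin n) ℝ) = 1 := by
  ext i j
  induction i using Fin.cases with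
  | zero =>
    induction j using Fin.cases with
    | zero => simp [Matrix.one_apply]
    | succ j => simp [Matrix.one_apply, (Fin.succ_ne_zero j).symm]
  | succ i =>
    induction j using Fin.cases with
    | zero => simp [Matrix.one_apply, Fin.succ_ne_zero i]
    | succ j => simp [Matrix.one_apply, Fin.succ_inj]

lemma neg_mul_sum' {α : Type*} [Fintype α] (c : ℝ) (f : α → ℝ) :
    ∑ i, -(c * f i) = -(c * ∑ i, f i) := by
  rw [Finset.mul_sum]
  exact Finset.sum_neg_distrib _

lemma quad_pos {n : ℕ} (M : Matrix (Fin (n+1)) (Fin (n+1)) ℝ)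
    (hMsym : M.IsSymm)
    (hMirr : ∀ i j : Fin (n + 1), i ≠ j → Relation.TransGen (fun a b => M a b ≠ 0) i j)
    (hMoff : ∀ i j, i ≠ j → M i j ≤ 0)
    (hMrow : ∀ i, ∑ j, M i j = 0)
    (y : Fin n → ℝ) (hy : y ≠ 0) :
    0 < ∑ i, ∑ k, y i * M i.succ k.succ * y k := by
  classical
  set z : Fin (n+1) → ℝ := Fin.cases 0 y with hz
  have hz0 : z 0 = 0 := rfl
  have hzs : ∀ i : Fin n, z i.succ = y i := fun i => rfl
  have hcol : ∀ j, ∑ i, M i j = 0 := by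
    intro j
    calc ∑ i, M i j = ∑ i, M j i := by
          refine Finset.sum_congr rfl fun i _ => ?_
          exact hMsym.apply j i
      _ = 0 := hMrow j
  have hform : ∑ i, ∑ k, y i * M i.succ k.succ * y k = ∑ i, ∑ j, z i * M i j * z j := by
    rw [Fin.sum_univ_succ]
    simp only [hz0, zero_mul, Finset.sum_const_zero, mul_zero]
    rw [zero_add]
    refine Finset.sum_congr rfl fun i _ => ?_
    rw [Fin.sum_univ_succ]
    simp [hz0, hzs]
  rw [hform]
  have key : ∑ i, ∑ j, z i * M i j * z j
      = ∑ i, ∑ j, (-(M i j) / 2) * (z i - z j)^2 := by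
    have h1 : ∑ i, ∑ j, M i j * (z i)^2 = 0 := by
      refine Finset.sum_eq_zero fun i _ => ?_
      rw [← Finset.sum_mul, hMrow i, zero_mul]
    have h2 : ∑ i, ∑ j, M i j * (z j)^2 = 0 := by
      rw [Finset.sum_comm]
      refine Finset.sum_eq_zero fun j _ => ?_
      rw [← Finset.sum_mul, hcol j, zero_mul]
    have expand : ∀ i j : Fin (n+1), (-(M i j) / 2) * (z i - z j)^2
        = z i * M i j * z j - (M i j * (z i)^2)/2 - (M i j * (z j)^2)/2 := by
      intro i j; ring
    rw [Finset.sum_congr rfl fun i _ => Finset.sum_congr rfl fun j _ => expand i j]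
    simp only [Finset.sum_sub_distrib, ← Finset.sum_div, h1, h2]
    ring
  rw [key]
  have hterm : ∀ i j : Fin (n+1), 0 ≤ (-(M i j) / 2) * (z i - z j)^2 := by
    intro i j
    rcases eq_or_ne i j with rfl | hij
    · simp
    · have := hMoff i j hij
      have h1 : 0 ≤ -(M i j) / 2 := by linarith
      positivity
  have hnn : 0 ≤ ∑ i, ∑ j, (-(M i j) / 2) * (z i - z j)^2 :=
    Finset.sum_nonneg fun i _ => Finset.sum_nonneg fun j _ => hterm i j
  rcases hnn.lt_or_eq with h | h
  · exact h
  exfalso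
  have hall : ∀ i j : Fin (n+1), (-(M i j) / 2) * (z i - z j)^2 = 0 := by
    intro i j
    have houter := (Finset.sum_eq_zero_iff_of_nonneg
      (fun i _ => Finset.sum_nonneg fun j _ => hterm i j)).1 h.symm i (Finset.mem_univ i)
    exact (Finset.sum_eq_zero_iff_of_nonneg (fun j _ => hterm i j)).1 houter j
      (Finset.mem_univ j)
  have hstep : ∀ i j : Fin (n+1), M i j ≠ 0 → z i = z j := by
    intro i j hM
    have := hall i j
    have hM2 : -(M i j) / 2 ≠ 0 := by
      simp only [ne_eq, div_eq_zero_iff, neg_eq_zero]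
      push_neg
      exact ⟨hM, by norm_num⟩
    have : (z i - z j)^2 = 0 := by
      rcases mul_eq_zero.1 this with h' | h'
      · exact absurd h' hM2
      · exact h'
    have := pow_eq_zero_iff (n := 2) (by norm_num) |>.1 this
    linarith
  have hzconst : ∀ i j : Fin (n+1), Relation.TransGen (fun a b => M a b ≠ 0) i j → z i = z j := by
    intro i j hij
    induction hij with
    | single h => exact hstep _ _ h
    | tail _ h ih => exact ih.trans (hstep _ _ h)
  obtain ⟨i, hi⟩ := Function.ne_iff.1 hy
  exact hi ((hzs i).symm.trans
    ((hzconst _ _ (hMirr i.succ 0 (Fin.succ_ne_zero i))).trans hz0))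

set_option maxHeartbeats 1000000 in
/-- for a controllable system under the structural assumptions, with
P diagonalizing Ã with distinct eigenvalues and all entries of P⁻¹𝟙̃ nonzero,
the matrix R = diag(1, -PΔ⁻¹diag(P⁻¹A(2:n,1))) is invertible and R⁻¹AR is an
MRMT matrix: it satisfies the structural assumptions and its lower-right block
is diagonal. -/
theorem mrmt_stmt12 {n : ℕ} (v : Fin (n + 1) → ℝ)
    (M A : Matrix (Fin (n + 1)) (Fin (n + 1)) ℝ) (B : Fin (n + 1) → ℝ)
    (hB : B = Pi.single 0 1)
    (hv : ∀ i, 0 < v i)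
    (hMsym : M.IsSymm)
    (hMirr : ∀ i j : Fin (n + 1), i ≠ j → Relation.TransGen (fun a b => M a b ≠ 0) i j)
    (hMdiag : ∀ i, 0 < M i i)
    (hMoff : ∀ i j, i ≠ j → M i j ≤ 0)
    (hMrow : ∀ i, ∑ j, M i j = 0)
    (hA : A = -(vecMulVec B B) - (Matrix.diagonal v)⁻¹ * M)
    (hctrb : (Matrix.of fun i (k : Fin (n + 1)) => ((A ^ (k : ℕ)) *ᵥ B) i).rank = n + 1)
    (P : Matrix (Fin n) (Fin n) ℝ) (hP : IsUnit P.det)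
    (lam : Fin n → ℝ)
    (hdiag : P⁻¹ * (A.submatrix Fin.succ Fin.succ) * P = Matrix.diagonal lam)
    (hX : ∀ i, (P⁻¹ *ᵥ fun _ => (1 : ℝ)) i ≠ 0)
    (hlam : Function.Injective lam)
    (R : Matrix (Fin (n + 1)) (Fin (n + 1)) ℝ)
    (hR : R = blockDiag1
      (-(P * (Matrix.diagonal lam)⁻¹ * Matrix.diagonal (P⁻¹ *ᵥ fun i => A i.succ 0)))) :
    IsUnit R.det ∧
    (∃ (v' : Fin (n + 1) → ℝ) (M' : Matrix (Fin (n + 1)) (Fin (n + 1)) ℝ),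
      (∀ i, 0 < v' i) ∧ M'.IsSymm ∧
      (∀ i j : Fin (n + 1), i ≠ j → Relation.TransGen (fun a b => M' a b ≠ 0) i j) ∧
      (∀ i, 0 < M' i i) ∧ (∀ i j, i ≠ j → M' i j ≤ 0) ∧ (∀ i, ∑ j, M' i j = 0) ∧
      R⁻¹ * A * R = -(vecMulVec B B) - (Matrix.diagonal v')⁻¹ * M') ∧
    (∀ i j : Fin n, i ≠ j → (R⁻¹ * A * R) i.succ j.succ = 0) := by
  classical
  have hv0 : ∀ i, v i ≠ 0 := fun i => (hv i).ne'
  -- entry formula for A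
  have hAe : ∀ i j, A i j = -(B i * B j) - (v i)⁻¹ * M i j := by
    intro i j
    have hdiaginv : (Matrix.diagonal v)⁻¹ = Matrix.diagonal (fun i => (v i)⁻¹) := by
      apply Matrix.inv_eq_left_inv
      rw [Matrix.diagonal_mul_diagonal]
      have h1 : (fun i => (v i)⁻¹ * v i) = fun _ => (1:ℝ) :=
        funext fun i => inv_mul_cancel₀ (hv0 i)
      rw [h1, Matrix.diagonal_one]
    rw [hA]
    simp [Matrix.sub_apply, Matrix.neg_apply, Matrix.vecMulVec_apply,
      hdiaginv, Matrix.diagonal_mul]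
  have hB0 : B 0 = 1 := by rw [hB]; simp
  have hBs : ∀ i : Fin n, B i.succ = 0 := by
    intro i; rw [hB]; exact Pi.single_eq_of_ne (Fin.succ_ne_zero i) 1
  have hA00 : A 0 0 = -1 - (v 0)⁻¹ * M 0 0 := by rw [hAe, hB0]; ring
  have hA0s : ∀ j : Fin n, A 0 j.succ = -((v 0)⁻¹ * M 0 j.succ) := by
    intro j; rw [hAe, hBs]; ring
  have hAs : ∀ (i : Fin n) (j : Fin (n+1)), A i.succ j = -((v i.succ)⁻¹ * M i.succ j) := by
    intro i j; rw [hAe, hBs]; ring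
  -- basic matrix facts
  have hPP : P * P⁻¹ = 1 := Matrix.mul_nonsing_inv P hP
  have hPP' : P⁻¹ * P = 1 := Matrix.nonsing_inv_mul P hP
  set x : Fin n → ℝ := P⁻¹ *ᵥ (fun _ => (1:ℝ)) with hxdef
  have hxe : ∀ j, x j = ∑ k, P⁻¹ j k := by
    intro j; simp [hxdef, Matrix.mulVec, dotProduct]
  have hxne : ∀ j, x j ≠ 0 := hX
  have hAP : (A.submatrix Fin.succ Fin.succ) * P = P * Matrix.diagonal lam := by
    have h := congrArg (fun X => P * X) hdiag
    simp only [← Matrix.mul_assoc, hPP, one_mul] at h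
    exact h
  have hPA : P⁻¹ * (A.submatrix Fin.succ Fin.succ) = Matrix.diagonal lam * P⁻¹ := by
    have h := congrArg (fun X => X * P⁻¹) hdiag
    simp only [Matrix.mul_assoc, hPP, mul_one] at h
    exact h
  have hEig : ∀ (i j : Fin n), ∑ k, A i.succ k.succ * P k j = lam j * P i j := by
    intro i j
    have h := congrFun (congrFun hAP i) j
    rw [Matrix.mul_apply, Matrix.mul_diagonal] at h
    simp only [Matrix.submatrix_apply] at h
    exact h.trans (mul_comm _ _)
  have hLeft : ∀ (j k : Fin n), ∑ i, P⁻¹ j i * A i.succ k.succ = lam j * P⁻¹ j k := by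
    intro j k
    have h := congrFun (congrFun hPA j) k
    rw [Matrix.mul_apply, Matrix.diagonal_mul] at h
    simp only [Matrix.submatrix_apply] at h
    exact h
  have hcolP : ∀ j, ∃ i, P i j ≠ 0 := by
    intro j
    by_contra hcon
    push_neg at hcon
    have h := congrFun (congrFun hPP' j) j
    simp only [Matrix.mul_apply, Matrix.one_apply_eq] at h
    rw [Finset.sum_eq_zero (fun k _ => by rw [hcon k, mul_zero])] at h
    exact zero_ne_one h
  set w : Fin n → ℝ := fun j => ∑ i, v i.succ * P i j ^ 2 with hwdef
  have hw : ∀ j, 0 < w j := by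
    intro j
    obtain ⟨i, hi⟩ := hcolP j
    refine Finset.sum_pos' (fun k _ => mul_nonneg (hv k.succ).le (sq_nonneg _)) ⟨i, Finset.mem_univ i, ?_⟩
    exact mul_pos (hv i.succ)
      (lt_of_le_of_ne (sq_nonneg _) (Ne.symm (pow_ne_zero 2 hi)))
  -- row relation of M and eigenvectors
  have hMP : ∀ (i j : Fin n), ∑ l, M i.succ l.succ * P l j = -(v i.succ * (lam j * P i j)) := by
    intro i j
    have h := hEig i j
    simp only [hAs] at h
    have h3 : ∑ l, v i.succ * (-((v i.succ)⁻¹ * M i.succ l.succ) * P l j)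
        = ∑ l, -(M i.succ l.succ * P l j) := by
      refine Finset.sum_congr rfl fun l _ => ?_
      have hne := hv0 i.succ
      field_simp
    calc ∑ l, M i.succ l.succ * P l j
        = -∑ l, -(M i.succ l.succ * P l j) := by simp
      _ = -∑ l, v i.succ * (-((v i.succ)⁻¹ * M i.succ l.succ) * P l j) := by rw [h3]
      _ = -(v i.succ * ∑ l, -((v i.succ)⁻¹ * M i.succ l.succ) * P l j) := by
            rw [Finset.mul_sum]
      _ = -(v i.succ * (lam j * P i j)) := by rw [h]
  -- eigenvalues are negative
  have hlamneg : ∀ j, lam j < 0 := by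
    intro j
    have hcolne : (fun i => P i j) ≠ 0 := by
      obtain ⟨i, hi⟩ := hcolP j
      intro hcon
      exact hi (congrFun hcon i)
    have hQ := quad_pos M hMsym hMirr hMoff hMrow (fun i => P i j) hcolne
    have hcalc : ∑ i, ∑ k, P i j * M i.succ k.succ * P k j = -(lam j * w j) := by
      calc ∑ i, ∑ k, P i j * M i.succ k.succ * P k j
          = ∑ i, P i j * ∑ k, M i.succ k.succ * P k j := by
            refine Finset.sum_congr rfl fun i _ => ?_
            rw [Finset.mul_sum]
            exact Finset.sum_congr rfl fun k _ => by ring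
        _ = ∑ i, -(lam j * (v i.succ * P i j ^ 2)) := by
            refine Finset.sum_congr rfl fun i _ => ?_
            rw [hMP i j]; ring
        _ = -(lam j * ∑ i, v i.succ * P i j ^ 2) := neg_mul_sum' _ _
    rw [hcalc] at hQ
    have hS : (0:ℝ) < ∑ i, v i.succ * P i j ^ 2 := hw j
    nlinarith [hS]
  have hlamne : ∀ j, lam j ≠ 0 := fun j => (hlamneg j).ne
  -- orthogonality
  have hg : ∀ k j : Fin n, k ≠ j → ∑ i, v i.succ * P i k * P i j = 0 := by
    intro k j hkj
    have h1 : ∑ i, ∑ l, P i k * (M i.succ l.succ * P l j) = -(lam j * ∑ i, v i.succ * P i k * P i j) := by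
      calc ∑ i, ∑ l, P i k * (M i.succ l.succ * P l j)
          = ∑ i, P i k * ∑ l, M i.succ l.succ * P l j := by
            refine Finset.sum_congr rfl fun i _ => ?_
            rw [Finset.mul_sum]
        _ = ∑ i, -(lam j * (v i.succ * P i k * P i j)) := by
            refine Finset.sum_congr rfl fun i _ => ?_
            rw [hMP i j]; ring
        _ = -(lam j * ∑ i, v i.succ * P i k * P i j) := neg_mul_sum' _ _
    have h2 : ∑ i, ∑ l, P i k * (M i.succ l.succ * P l j) = -(lam k * ∑ i, v i.succ * P i k * P i j) := by
      calc ∑ i, ∑ l, P i k * (M i.succ l.succ * P l j)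
          = ∑ l, ∑ i, P i k * (M i.succ l.succ * P l j) := Finset.sum_comm
        _ = ∑ l, P l j * ∑ i, M l.succ i.succ * P i k := by
            refine Finset.sum_congr rfl fun l _ => ?_
            rw [Finset.mul_sum]
            refine Finset.sum_congr rfl fun i _ => ?_
            rw [hMsym.apply l.succ i.succ]    -- M i.succ l.succ = M l.succ i.succ ?
            ring
        _ = ∑ l, -(lam k * (v l.succ * P l k * P l j)) := by
            refine Finset.sum_congr rfl fun l _ => ?_
            rw [hMP l k]; ring
        _ = -(lam k * ∑ i, v i.succ * P i k * P i j) := neg_mul_sum' _ _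
    have h3 : (lam j - lam k) * ∑ i, v i.succ * P i k * P i j = 0 := by
      have := h1.symm.trans h2
      ring_nf
      ring_nf at this
      linarith
    rcases mul_eq_zero.1 h3 with h | h
    · exact absurd (by linarith : lam j = lam k) (fun he => hkj (hlam he).symm)
    · exact h
  -- explicit inverse of P
  have hPinv : P⁻¹ = Matrix.of (fun j i => v i.succ * P i j / w j) := by
    apply Matrix.inv_eq_left_inv
    ext j k
    rw [Matrix.mul_apply]
    rcases eq_or_ne j k with rfl | hne
    · rw [Matrix.one_apply_eq]
      have : ∑ i, (Matrix.of (fun j i => v i.succ * P i j / w j)) j i * P i j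
          = (∑ i, v i.succ * P i j ^ 2) / w j := by
        rw [Finset.sum_div]
        refine Finset.sum_congr rfl fun i _ => ?_
        simp only [Matrix.of_apply]
        ring
      rw [this]
      exact div_self (hw j).ne'
    · rw [Matrix.one_apply_ne hne]
      have : ∑ i, (Matrix.of (fun j i => v i.succ * P i j / w j)) j i * P i k
          = (∑ i, v i.succ * P i j * P i k) / w j := by
        rw [Finset.sum_div]
        refine Finset.sum_congr rfl fun i _ => ?_
        simp only [Matrix.of_apply]
        ring
      rw [this, hg j k hne, zero_div]
  have hPie : ∀ j i, P⁻¹ j i = v i.succ * P i j / w j := by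
    intro j i; rw [hPinv]; rfl
  have hxw : ∀ j, x j * w j = ∑ i, v i.succ * P i j := by
    intro j
    rw [hxe, Finset.sum_congr rfl fun k (_ : k ∈ Finset.univ) => hPie j k,
      ← Finset.sum_div, div_mul_cancel₀ _ (hw j).ne']
  -- row sums of A
  have hArow : ∀ i : Fin n, ∑ j, A i.succ j = 0 := by
    intro i
    calc ∑ j, A i.succ j = ∑ j, -((v i.succ)⁻¹ * M i.succ j) :=
          Finset.sum_congr rfl fun j _ => hAs i j
      _ = -((v i.succ)⁻¹ * ∑ j, M i.succ j) := neg_mul_sum' _ _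
      _ = 0 := by rw [hMrow i.succ]; ring
  have haA : ∀ i : Fin n, A i.succ 0 = -∑ k : Fin n, A i.succ k.succ := by
    intro i
    have h := hArow i
    rw [Fin.sum_univ_succ] at h
    linarith
  have hPia : ∀ j, ∑ i, P⁻¹ j i * A i.succ 0 = -(lam j * x j) := by
    intro j
    calc ∑ i, P⁻¹ j i * A i.succ 0
        = ∑ i, -(∑ k : Fin n, P⁻¹ j i * A i.succ k.succ) := by
          refine Finset.sum_congr rfl fun i _ => ?_
          rw [haA i, mul_neg, Finset.mul_sum]
      _ = -∑ i, ∑ k : Fin n, P⁻¹ j i * A i.succ k.succ := by rw [Finset.sum_neg_distrib]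
      _ = -∑ k : Fin n, ∑ i, P⁻¹ j i * A i.succ k.succ := by rw [Finset.sum_comm]
      _ = -∑ k, lam j * P⁻¹ j k := by
          refine congrArg Neg.neg (Finset.sum_congr rfl fun k _ => hLeft j k)
      _ = -(lam j * ∑ k, P⁻¹ j k) := by rw [Finset.mul_sum]
      _ = -(lam j * x j) := by rw [hxe]
  -- R in simplified form
  have hRform : R = blockDiag1 (P * Matrix.diagonal x) := by
    rw [hR]
    congr 1
    have hvec : (P⁻¹ *ᵥ fun i => A i.succ 0) = fun j => -(lam j * x j) := by
      funext j
      simp only [Matrix.mulVec, dotProduct]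
      exact hPia j
    have hlaminv : (Matrix.diagonal lam)⁻¹ = Matrix.diagonal (fun j => (lam j)⁻¹) := by
      apply Matrix.inv_eq_left_inv
      rw [Matrix.diagonal_mul_diagonal]
      have h1 : (fun j => (lam j)⁻¹ * lam j) = fun _ => (1:ℝ) :=
        funext fun j => inv_mul_cancel₀ (hlamne j)
      rw [h1, Matrix.diagonal_one]
    rw [hvec, hlaminv, Matrix.mul_assoc, Matrix.diagonal_mul_diagonal]
    have h2 : (fun j => (lam j)⁻¹ * -(lam j * x j)) = fun j => -(x j) := by
      funext j
      rw [inv_mul_eq_div, div_eq_iff (hlamne j)]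
      ring
    rw [h2]
    have h3 : Matrix.diagonal (fun j => -(x j)) = -Matrix.diagonal x := by
      rw [← Matrix.diagonal_neg]
    rw [h3, Matrix.mul_neg, neg_neg]
  have hR00 : R 0 0 = 1 := by rw [hRform]; simp
  have hR0s : ∀ j : Fin n, R 0 j.succ = 0 := by intro j; rw [hRform]; simp
  have hRs0 : ∀ i : Fin n, R i.succ 0 = 0 := by intro i; rw [hRform]; simp
  have hRss : ∀ i j : Fin n, R i.succ j.succ = P i j * x j := by
    intro i j; rw [hRform]; simp [Matrix.mul_diagonal]
  -- invertibility of R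
  have hRinv : R * blockDiag1 (Matrix.diagonal (fun j => (x j)⁻¹) * P⁻¹) = 1 := by
    rw [hRform, bd_mul]
    have h1 : (P * Matrix.diagonal x) * (Matrix.diagonal (fun j => (x j)⁻¹) * P⁻¹) = P * P⁻¹ := by
      rw [Matrix.mul_assoc, ← Matrix.mul_assoc (Matrix.diagonal x), Matrix.diagonal_mul_diagonal]
      have h2 : (fun j => x j * (x j)⁻¹) = fun _ => (1:ℝ) :=
        funext fun j => mul_inv_cancel₀ (hxne j)
      rw [h2, Matrix.diagonal_one, one_mul]
    rw [h1, hPP, bd_one]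
  have hdetR : IsUnit R.det := Matrix.isUnit_det_of_right_inverse hRinv
  -- the new volumes and mass matrix
  set v' : Fin (n+1) → ℝ := fun i => Fin.cases (v 0) (fun j => x j ^ 2 * w j) i with hv'def
  set M' : Matrix (Fin (n+1)) (Fin (n+1)) ℝ := Matrix.of (fun i j =>
    Fin.cases (Fin.cases (M 0 0) (fun j' => lam j' * (x j' ^ 2 * w j')) j)
      (fun i' => Fin.cases (lam i' * (x i' ^ 2 * w i'))
        (fun j' => if i' = j' then -(lam i' * (x i' ^ 2 * w i')) else 0) j) i) with hM'def
  have hv'0 : v' 0 = v 0 := rfl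
  have hv's : ∀ j : Fin n, v' j.succ = x j ^ 2 * w j := by
    intro j; simp [hv'def]
  have hM'00 : M' 0 0 = M 0 0 := rfl
  have hM'0s : ∀ j : Fin n, M' 0 j.succ = lam j * (x j ^ 2 * w j) := by
    intro j; simp [hM'def]
  have hM's0 : ∀ i : Fin n, M' i.succ 0 = lam i * (x i ^ 2 * w i) := by
    intro i; simp [hM'def]
  have hM'ss : ∀ i j : Fin n, M' i.succ j.succ
      = if i = j then -(lam i * (x i ^ 2 * w i)) else 0 := by
    intro i j; simp [hM'def]
  have hx2 : ∀ j : Fin n, (0:ℝ) < x j ^ 2 :=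
    fun j => lt_of_le_of_ne (sq_nonneg _) (Ne.symm (pow_ne_zero 2 (hxne j)))
  have hv'pos : ∀ i, 0 < v' i := by
    intro i
    induction i using Fin.cases with
    | zero => rw [hv'0]; exact hv 0
    | succ i => rw [hv's]; exact mul_pos (hx2 i) (hw i)
  have hv'ne : ∀ i, v' i ≠ 0 := fun i => (hv'pos i).ne'
  -- key scalar identities
  have hs0 : ∀ j, ∑ k, v k.succ * P k j * A k.succ 0 = -(lam j * x j) * w j := by
    intro j
    have hvp : ∀ k : Fin n, v k.succ * P k j = P⁻¹ j k * w j := by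
      intro k
      rw [hPie j k, div_mul_cancel₀ _ (hw j).ne']
    calc ∑ k, v k.succ * P k j * A k.succ 0
        = ∑ k, P⁻¹ j k * A k.succ 0 * w j := by
          refine Finset.sum_congr rfl fun k _ => ?_
          rw [hvp k]; ring
      _ = (∑ k, P⁻¹ j k * A k.succ 0) * w j := by rw [Finset.sum_mul]
      _ = -(lam j * x j) * w j := by rw [hPia j]
  have h0s : ∀ j, ∑ k : Fin n, A 0 k.succ * (P k j * x j)
      = -((v 0)⁻¹ * (lam j * (x j ^ 2 * w j))) := by
    intro j
    have hM0s : ∀ k : Fin n, M 0 k.succ = -(v k.succ * A k.succ 0) := by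
      intro k
      rw [hAs k 0, ← hMsym.apply 0 k.succ]
      have hne := hv0 k.succ
      field_simp
    calc ∑ k : Fin n, A 0 k.succ * (P k j * x j)
        = ∑ k : Fin n, (v 0)⁻¹ * x j * (v k.succ * P k j * A k.succ 0) := by
          refine Finset.sum_congr rfl fun k _ => ?_
          rw [hA0s k, hM0s k]; ring
      _ = (v 0)⁻¹ * x j * ∑ k, v k.succ * P k j * A k.succ 0 := by rw [← Finset.mul_sum]
      _ = -((v 0)⁻¹ * (lam j * (x j ^ 2 * w j))) := by rw [hs0 j]; ring
  have hPx : ∀ k, ∑ j, P k j * x j = 1 := by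
    intro k
    calc ∑ j, P k j * x j = ∑ j, ∑ l, P k j * P⁻¹ j l := by
          refine Finset.sum_congr rfl fun j _ => ?_
          rw [hxe j, Finset.mul_sum]
      _ = ∑ l, ∑ j, P k j * P⁻¹ j l := Finset.sum_comm
      _ = ∑ l, (1 : Matrix (Fin n) (Fin n) ℝ) k l := by
          refine Finset.sum_congr rfl fun l _ => ?_
          rw [← Matrix.mul_apply, hPP]
      _ = 1 := by simp [Matrix.one_apply]
  have hrow0 : M 0 0 + ∑ j, lam j * (x j ^ 2 * w j) = 0 := by
    have h1 : ∑ j, lam j * (x j ^ 2 * w j)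
        = -(v 0) * ∑ j, ∑ k : Fin n, A 0 k.succ * (P k j * x j) := by
      calc ∑ j, lam j * (x j ^ 2 * w j)
          = ∑ j, -(v 0) * -((v 0)⁻¹ * (lam j * (x j ^ 2 * w j))) := by
            refine Finset.sum_congr rfl fun j _ => ?_
            have hne := hv0 0
            field_simp
        _ = -(v 0) * ∑ j, -((v 0)⁻¹ * (lam j * (x j ^ 2 * w j))) := by rw [← Finset.mul_sum]
        _ = -(v 0) * ∑ j, ∑ k : Fin n, A 0 k.succ * (P k j * x j) := by
            refine congrArg _ (Finset.sum_congr rfl fun j _ => (h0s j).symm)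
    have h2 : ∑ j, ∑ k : Fin n, A 0 k.succ * (P k j * x j) = ∑ k : Fin n, A 0 k.succ := by
      rw [Finset.sum_comm]
      refine Finset.sum_congr rfl fun k _ => ?_
      rw [← Finset.mul_sum, hPx k, mul_one]
    have h3 : ∑ k : Fin n, A 0 k.succ = (v 0)⁻¹ * M 0 0 := by
      have h4 : ∑ k : Fin n, M 0 k.succ = -(M 0 0) := by
        have h5 := hMrow 0
        rw [Fin.sum_univ_succ] at h5
        linarith
      calc ∑ k : Fin n, A 0 k.succ = ∑ k : Fin n, -((v 0)⁻¹ * M 0 k.succ) :=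
            Finset.sum_congr rfl fun k _ => hA0s k
        _ = -((v 0)⁻¹ * ∑ k : Fin n, M 0 k.succ) := neg_mul_sum' _ _
        _ = (v 0)⁻¹ * M 0 0 := by rw [h4]; ring
    rw [h1, h2, h3]
    have hne := hv0 0
    field_simp
    ring
  -- the target matrix
  set D : Matrix (Fin (n+1)) (Fin (n+1)) ℝ
      := -(vecMulVec B B) - (Matrix.diagonal v')⁻¹ * M' with hDdef
  have hDe : ∀ i j, D i j = -(B i * B j) - (v' i)⁻¹ * M' i j := by
    intro i j
    have hdiaginv : (Matrix.diagonal v')⁻¹ = Matrix.diagonal (fun i => (v' i)⁻¹) := by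
      apply Matrix.inv_eq_left_inv
      rw [Matrix.diagonal_mul_diagonal]
      have h1 : (fun i => (v' i)⁻¹ * v' i) = fun _ => (1:ℝ) :=
        funext fun i => inv_mul_cancel₀ (hv'ne i)
      rw [h1, Matrix.diagonal_one]
    rw [hDdef]
    simp [Matrix.sub_apply, Matrix.neg_apply, Matrix.vecMulVec_apply,
      hdiaginv, Matrix.diagonal_mul]
  have hD00 : D 0 0 = -1 - (v 0)⁻¹ * M 0 0 := by
    rw [hDe, hB0, hv'0, hM'00]; ring
  have hD0s : ∀ j : Fin n, D 0 j.succ = -((v 0)⁻¹ * (lam j * (x j ^ 2 * w j))) := by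
    intro j; rw [hDe, hB0, hBs, hv'0, hM'0s]; ring
  have hDs0 : ∀ i : Fin n, D i.succ 0 = -(lam i) := by
    intro i
    rw [hDe, hBs, hv's, hM's0]
    have h1 : (x i ^ 2 * w i) ≠ 0 := (mul_pos (hx2 i) (hw i)).ne'
    field_simp
    rw [mul_div_cancel_left₀ _ (mul_ne_zero (hxne i) (hw i).ne')]; ring
  have hDss : ∀ i j : Fin n, D i.succ j.succ = if i = j then lam i else 0 := by
    intro i j
    rw [hDe, hBs, hv's, hM'ss]
    rcases eq_or_ne i j with rfl | hij
    · rw [if_pos rfl, if_pos rfl]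
      have h1 : (x i ^ 2 * w i) ≠ 0 := (mul_pos (hx2 i) (hw i)).ne'
      rw [mul_neg, mul_comm (lam i), ← mul_assoc, inv_mul_cancel₀ h1]; ring
    · simp [hij]
  -- the central identity A * R = R * D
  have hARD : A * R = R * D := by
    ext i j
    rw [Matrix.mul_apply, Matrix.mul_apply]
    induction i using Fin.cases with
    | zero =>
      induction j using Fin.cases with
      | zero =>
        rw [Fin.sum_univ_succ, Fin.sum_univ_succ]
        have e1 : ∑ k : Fin n, A 0 k.succ * R k.succ 0 = 0 :=
          Finset.sum_eq_zero fun k _ => by rw [hRs0 k, mul_zero]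
        have e2 : ∑ k : Fin n, R 0 k.succ * D k.succ 0 = 0 :=
          Finset.sum_eq_zero fun k _ => by rw [hR0s k, zero_mul]
        rw [e1, e2, hR00, hD00, hA00]
        ring
      | succ j =>
        rw [Fin.sum_univ_succ, Fin.sum_univ_succ]
        have e1 : ∑ k : Fin n, A 0 k.succ * R k.succ j.succ
            = ∑ k : Fin n, A 0 k.succ * (P k j * x j) :=
          Finset.sum_congr rfl fun k _ => by rw [hRss k j]
        have e2 : ∑ k : Fin n, R 0 k.succ * D k.succ j.succ = 0 :=
          Finset.sum_eq_zero fun k _ => by rw [hR0s k, zero_mul]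
        rw [e1, e2, hR0s j, hR00, h0s j, hD0s j]
        ring
    | succ i =>
      induction j using Fin.cases with
      | zero =>
        rw [Fin.sum_univ_succ, Fin.sum_univ_succ]
        have e1 : ∑ k : Fin n, A i.succ k.succ * R k.succ 0 = 0 :=
          Finset.sum_eq_zero fun k _ => by rw [hRs0 k, mul_zero]
        have e2 : ∑ k : Fin n, R i.succ k.succ * D k.succ 0
            = ∑ k : Fin n, P i k * x k * -(lam k) :=
          Finset.sum_congr rfl fun k _ => by rw [hRss i k, hDs0 k]
        have h1 : ∑ k : Fin n, P i k * x k * -(lam k) = A i.succ 0 := by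
          calc ∑ k : Fin n, P i k * x k * -(lam k)
              = ∑ k : Fin n, P i k * ∑ l, P⁻¹ k l * A l.succ 0 := by
                refine Finset.sum_congr rfl fun k _ => ?_
                rw [hPia k]; ring
            _ = ∑ k : Fin n, ∑ l, P i k * (P⁻¹ k l * A l.succ 0) := by
                refine Finset.sum_congr rfl fun k _ => Finset.mul_sum _ _ _
            _ = ∑ l, ∑ k : Fin n, P i k * (P⁻¹ k l * A l.succ 0) := Finset.sum_comm
            _ = ∑ l, (∑ k : Fin n, P i k * P⁻¹ k l) * A l.succ 0 := by
                refine Finset.sum_congr rfl fun l _ => ?_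
                rw [Finset.sum_mul]
                exact Finset.sum_congr rfl fun k _ => by ring
            _ = ∑ l, (1 : Matrix (Fin n) (Fin n) ℝ) i l * A l.succ 0 := by
                refine Finset.sum_congr rfl fun l _ => ?_
                rw [← Matrix.mul_apply, hPP]
            _ = A i.succ 0 := by simp [Matrix.one_apply]
        rw [e1, e2, h1, hR00, hRs0 i]
        ring
      | succ j =>
        rw [Fin.sum_univ_succ, Fin.sum_univ_succ]
        have e1 : ∑ k : Fin n, A i.succ k.succ * R k.succ j.succ
            = ∑ k : Fin n, A i.succ k.succ * (P k j * x j) :=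
          Finset.sum_congr rfl fun k _ => by rw [hRss k j]
        have e2 : ∑ k : Fin n, R i.succ k.succ * D k.succ j.succ
            = ∑ k : Fin n, P i k * x k * (if k = j then lam k else 0) :=
          Finset.sum_congr rfl fun k _ => by rw [hRss i k, hDss k j]
        have h1 : ∑ k : Fin n, A i.succ k.succ * (P k j * x j) = lam j * P i j * x j := by
          calc ∑ k : Fin n, A i.succ k.succ * (P k j * x j)
              = (∑ k : Fin n, A i.succ k.succ * P k j) * x j := by
                rw [Finset.sum_mul]
                exact Finset.sum_congr rfl fun k _ => by ring
            _ = lam j * P i j * x j := by rw [hEig i j]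
        have h2 : ∑ k : Fin n, P i k * x k * (if k = j then lam k else 0)
            = lam j * P i j * x j := by
          refine (Finset.sum_eq_single j (fun k _ hk => by rw [if_neg hk, mul_zero])
            (fun h => absurd (Finset.mem_univ j) h)).trans ?_
          rw [if_pos rfl]; ring
        rw [e1, e2, h1, h2, hR0s j, hRs0 i]
        ring
  -- assemble
  have hfinal : R⁻¹ * A * R = D := by
    rw [Matrix.mul_assoc, hARD, ← Matrix.mul_assoc, Matrix.nonsing_inv_mul R hdetR, one_mul]
  refine ⟨hdetR, ⟨v', M', hv'pos, ?_, ?_, ?_, ?_, ?_, hfinal⟩, ?_⟩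
  · -- symmetry
    rw [Matrix.IsSymm.ext_iff]
    intro i j
    induction i using Fin.cases with
    | zero =>
      induction j using Fin.cases with
      | zero => rfl
      | succ j => rw [hM'0s, hM's0]
    | succ i =>
      induction j using Fin.cases with
      | zero => rw [hM'0s, hM's0]
      | succ j =>
        rw [hM'ss, hM'ss]
        rcases eq_or_ne i j with rfl | hij
        · simp
        · simp [hij, hij.symm]
  · -- irreducibility
    intro i j hij
    have hne0 : ∀ k : Fin n, M' 0 k.succ ≠ 0 := by
      intro k
      rw [hM'0s]
      exact mul_ne_zero (hlamne k) (mul_pos (hx2 k) (hw k)).ne'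
    have hne0' : ∀ k : Fin n, M' k.succ 0 ≠ 0 := by
      intro k
      rw [hM's0]
      exact mul_ne_zero (hlamne k) (mul_pos (hx2 k) (hw k)).ne'
    induction i using Fin.cases with
    | zero =>
      induction j using Fin.cases with
      | zero => exact absurd rfl hij
      | succ j => exact Relation.TransGen.single (hne0 j)
    | succ i =>
      induction j using Fin.cases with
      | zero => exact Relation.TransGen.single (hne0' i)
      | succ j =>
        exact Relation.TransGen.head (hne0' i) (Relation.TransGen.single (hne0 j))
  · -- positive diagonal
    intro i
    induction i using Fin.cases with
    | zero => rw [hM'00]; exact hMdiag 0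
    | succ i =>
      rw [hM'ss, if_pos rfl]
      have := hlamneg i
      nlinarith [mul_pos (hx2 i) (hw i)]
  · -- nonpositive off-diagonal
    intro i j hij
    induction i using Fin.cases with
    | zero =>
      induction j using Fin.cases with
      | zero => exact absurd rfl hij
      | succ j =>
        rw [hM'0s]
        have := hlamneg j
        nlinarith [mul_pos (hx2 j) (hw j)]
    | succ i =>
      induction j using Fin.cases with
      | zero =>
        rw [hM's0]
        have := hlamneg i
        nlinarith [mul_pos (hx2 i) (hw i)]
      | succ j =>
        have hij' : i ≠ j := fun h => hij (by rw [h])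
        rw [hM'ss, if_neg hij']
  · -- zero row sums
    intro i
    induction i using Fin.cases with
    | zero =>
      rw [Fin.sum_univ_succ, hM'00,
        Finset.sum_congr rfl fun j (_ : j ∈ Finset.univ) => hM'0s j]
      exact hrow0
    | succ i =>
      rw [Fin.sum_univ_succ, hM's0,
        Finset.sum_congr rfl fun j (_ : j ∈ Finset.univ) => hM'ss i j]
      rw [Finset.sum_ite_eq Finset.univ i (fun _ => -(lam i * (x i ^ 2 * w i)))]
      simp
  · -- diagonal lower-right block
    intro i j hij
    rw [hfinal, hDss i j, if_neg hij]
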